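/- Under the previous assumptions, and additionally ‖e‖₂ ≤ ε_b‖b‖₂ with b = Ax, the total noise obeys ‖Ex‖₂ + ‖e‖₂ ≤ ( (ε^{(K)}κ + ε_A·α·r_K)/(1 - κ(r_K + s_K/√K)) + ε_b )·‖b‖₂. -/

import Mathlib

open scoped BigOperators

/-- The Euclidean (ℓ₂) norm of a finitely indexed complex vector. -/
noncomputable def l2 {ι : Type*} [Fintype ι] (v : ι → ℂ) : ℝ :=
  Real.sqrt (∑ i, ‖v i‖ ^ 2)

/-- The ℓ₁ norm of a finitely indexed complex vector. -/
noncomputable def l1 {ι : Type*} [Fintype ι] (v : ι → ℂ) : ℝ :=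
  ∑ i, ‖v i‖

/-- A vector is `K`-sparse if it has at most `K` nonzero entries. -/
def Sparse {n : ℕ} (K : ℕ) (x : Fin n → ℂ) : Prop :=
  ∃ s : Finset (Fin n), s.card ≤ K ∧ ∀ i ∉ s, x i = 0

/-- `xK` is a best `K`-term approximation of `x`: it is `K`-sparse, agrees with `x`
on its support, and keeps the largest-magnitude entries. -/
def IsBestKApprox {n : ℕ} (K : ℕ) (x xK : Fin n → ℂ) : Prop :=
  Sparse K xK ∧ (∀ i, xK i ≠ 0 → xK i = x i) ∧
    (∀ i j, xK i ≠ 0 → xK j = 0 → ‖x j‖ ≤ ‖x i‖)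

lemma l2_eq_norm {ι : Type*} [Fintype ι] (v : ι → ℂ) :
    l2 v = ‖(WithLp.linearEquiv 2 ℂ (ι → ℂ)).symm v‖ := by
  rw [EuclideanSpace.norm_eq]; rfl

lemma l2_nonneg {ι : Type*} [Fintype ι] (v : ι → ℂ) : 0 ≤ l2 v :=
  Real.sqrt_nonneg _

lemma l1_nonneg {ι : Type*} [Fintype ι] (v : ι → ℂ) : 0 ≤ l1 v :=
  Finset.sum_nonneg fun _ _ => norm_nonneg _

lemma l2_zero {ι : Type*} [Fintype ι] : l2 (0 : ι → ℂ) = 0 := by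
  simp [l2]

lemma l2_pos {ι : Type*} [Fintype ι] {v : ι → ℂ} (hv : v ≠ 0) : 0 < l2 v := by
  rw [l2_eq_norm]
  rw [norm_pos_iff]
  intro h
  apply hv
  have := congrArg (WithLp.linearEquiv 2 ℂ (ι → ℂ)) h
  simpa using this

lemma l2_add_le {ι : Type*} [Fintype ι] (u v : ι → ℂ) : l2 (u + v) ≤ l2 u + l2 v := by
  simp only [l2_eq_norm, map_add]
  exact norm_add_le _ _

lemma l2_sum_le {ι β : Type*} [Fintype ι] (s : Finset β) (f : β → ι → ℂ) :
    l2 (∑ i ∈ s, f i) ≤ ∑ i ∈ s, l2 (f i) := by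
  simp only [l2_eq_norm, map_sum]
  exact norm_sum_le _ _

lemma l2_mono {ι : Type*} [Fintype ι] {u w : ι → ℂ} (h : ∀ i, ‖u i‖ ≤ ‖w i‖) :
    l2 u ≤ l2 w := by
  apply Real.sqrt_le_sqrt
  exact Finset.sum_le_sum fun i _ => pow_le_pow_left₀ (norm_nonneg _) (h i) 2

lemma rip_upper {m n K : ℕ} {A : Matrix (Fin m) (Fin n) ℂ} {δ : ℝ} (hδ0 : 0 ≤ δ)
    (hRIP : ∀ v : Fin n → ℂ, Sparse K v → l2 (A.mulVec v) ^ 2 ≤ (1 + δ) * l2 v ^ 2)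
    {w : Fin n → ℂ} (hw : Sparse K w) :
    l2 (A.mulVec w) ≤ Real.sqrt (1 + δ) * l2 w := by
  have h := hRIP w hw
  have h1 : l2 (A.mulVec w) = Real.sqrt (l2 (A.mulVec w) ^ 2) :=
    (Real.sqrt_sq (l2_nonneg _)).symm
  rw [h1]
  calc Real.sqrt (l2 (A.mulVec w) ^ 2) ≤ Real.sqrt ((1 + δ) * l2 w ^ 2) :=
        Real.sqrt_le_sqrt h
    _ = Real.sqrt (1 + δ) * l2 w := by
        rw [Real.sqrt_mul (by linarith), Real.sqrt_sq (l2_nonneg _)]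

lemma mulVec_le_blocks {m n K : ℕ} (hK : 0 < K) {A : Matrix (Fin m) (Fin n) ℂ} {δ : ℝ}
    (hδ0 : 0 ≤ δ)
    (hRIP : ∀ v : Fin n → ℂ, Sparse K v → l2 (A.mulVec v) ^ 2 ≤ (1 + δ) * l2 v ^ 2)
    (v : Fin n → ℂ) :
    l2 (A.mulVec v) ≤ Real.sqrt (1 + δ) * (l2 v + l1 v / Real.sqrt K) := by
  classical
  have hKR : (0:ℝ) < K := by exact_mod_cast hK
  have hsK : (0:ℝ) < Real.sqrt K := Real.sqrt_pos.mpr hKR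
  set σ := Tuple.sort (fun k : Fin n => -‖v k‖) with hσ
  have hmono : ∀ k l : Fin n, k ≤ l → ‖v (σ l)‖ ≤ ‖v (σ k)‖ := by
    intro k l hkl
    have := Tuple.monotone_sort (fun k : Fin n => -‖v k‖) hkl
    simpa using this
  set c : Fin n → ℕ := fun j => (σ.symm j : ℕ) / K with hc
  set t := n / K + 1 with ht
  set g : ℕ → Fin n → ℂ := fun i j => if c j = i then v j else 0 with hg
  set B : ℕ → Finset (Fin n) := fun i => Finset.univ.filter (fun j => c j = i) with hB
  have hct : ∀ j, c j ∈ Finset.range t := by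
    intro j
    simp only [Finset.mem_range, ht, hc]
    exact Nat.lt_succ_of_le (Nat.div_le_div_right (le_of_lt (σ.symm j).isLt))
  -- decomposition
  have hdecomp : v = ∑ i ∈ Finset.range t, g i := by
    funext j
    rw [Finset.sum_apply]
    simp only [hg]
    rw [Finset.sum_ite_eq]
    simp [hct j]
  -- bounds on c-values
  have hcb : ∀ j : Fin n, c j * K ≤ (σ.symm j : ℕ) ∧ (σ.symm j : ℕ) < c j * K + K := by
    intro j
    constructor
    · exact Nat.div_mul_le_self _ _
    · calc (σ.symm j : ℕ) = K * ((σ.symm j : ℕ) / K) + (σ.symm j : ℕ) % K :=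
            (Nat.div_add_mod _ _).symm
        _ < K * ((σ.symm j : ℕ) / K) + K := by
            have := Nat.mod_lt ((σ.symm j : ℕ)) hK
            omega
        _ = c j * K + K := by rw [mul_comm]
  -- cardinality bound
  have hBcard : ∀ i, (B i).card ≤ K := by
    intro i
    have h1 : (B i).card ≤ (Finset.Ico (i*K) (i*K+K)).card := by
      apply Finset.card_le_card_of_injOn (fun j => ((σ.symm j : Fin n) : ℕ))
      · intro j hj
        simp only [hB, Finset.mem_coe, Finset.mem_filter] at hj
        obtain ⟨h1, h2⟩ := hcb j
        rw [hj.2] at h1 h2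
        exact Finset.mem_Ico.mpr ⟨h1, h2⟩
      · intro a _ b _ hab
        exact σ.symm.injective (Fin.val_injective hab)
    simpa [Nat.card_Ico] using h1
  have hsparse : ∀ i, Sparse K (g i) := by
    intro i
    refine ⟨B i, hBcard i, fun j hj => ?_⟩
    simp only [hB, Finset.mem_filter, Finset.mem_univ, true_and] at hj
    simp [hg, hj]
  -- l2 of block 0 part
  have hg0 : l2 (g 0) ≤ l2 v := by
    apply l2_mono
    intro j
    simp only [hg]
    split <;> simp
  -- the block-sum function L
  set L : ℕ → ℝ := fun i => ∑ j ∈ B i, ‖v j‖ with hL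
  have hLnn : ∀ i, 0 ≤ L i := fun i => Finset.sum_nonneg fun _ _ => norm_nonneg _
  -- bound on each nonzero entry of block i+1
  have hentry : ∀ i (j : Fin n), c j = i + 1 → ‖v j‖ ≤ L i / K := by
    intro i j hj
    -- block i has exactly K elements
    have hle : i*K + K ≤ n := by
      obtain ⟨h1, _⟩ := hcb j
      rw [hj] at h1
      have h2 := (σ.symm j).isLt
      have h3 : (i+1)*K = i*K + K := by ring
      omega
    have hcard : (B i).card = K := by
      have hIK : (Finset.Ico (i*K) (i*K+K)).card = K := by simp
      rw [← hIK]
      refine Finset.card_bij' (fun j _ => ((σ.symm j : Fin n) : ℕ))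
          (fun a ha => σ ⟨a, lt_of_lt_of_le (Finset.mem_Ico.mp ha).2 hle⟩)
          ?_ ?_ ?_ ?_
      · intro a ha
        simp only [hB, Finset.mem_filter, Finset.mem_univ, true_and] at ha
        obtain ⟨h1, h2⟩ := hcb a
        rw [ha] at h1 h2
        exact Finset.mem_Ico.mpr ⟨h1, h2⟩
      · intro a ha
        obtain ⟨h1, h2⟩ := Finset.mem_Ico.mp ha
        simp only [hB, Finset.mem_filter, Finset.mem_univ, true_and, hc,
          Equiv.symm_apply_apply]
        refine Nat.div_eq_of_lt_le ?_ ?_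
        · simpa using h1
        · have : (i+1)*K = i*K + K := by ring
          simpa [this] using h2
      · intro a _
        simp
      · intro a _
        simp
    -- entry bound via the minimum of block i
    have hjm : ∀ j' ∈ B i, ‖v j‖ ≤ ‖v j'‖ := by
      intro j' hj'
      simp only [hB, Finset.mem_filter, Finset.mem_univ, true_and] at hj'
      have hlt : (σ.symm j' : ℕ) < (σ.symm j : ℕ) := by
        obtain ⟨h1, h2⟩ := hcb j
        obtain ⟨h3, h4⟩ := hcb j'
        rw [hj] at h1
        rw [hj'] at h4
        have : (i+1)*K = i*K + K := by ring
        omega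
      have := hmono (σ.symm j') (σ.symm j) (le_of_lt hlt)
      simpa using this
    have hK' : (B i).card • ‖v j‖ ≤ L i :=
      Finset.card_nsmul_le_sum (B i) _ _ hjm
    rw [hcard, nsmul_eq_mul] at hK'
    rw [le_div_iff₀ hKR]
    calc ‖v j‖ * K = K * ‖v j‖ := by ring
      _ ≤ L i := hK'
  -- l2 bound for block i+1
  have hgblock : ∀ i, l2 (g (i+1)) ≤ L i / Real.sqrt K := by
    intro i
    have hnn : 0 ≤ L i / (K:ℝ) := div_nonneg (hLnn i) hKR.le
    have hstep : ∀ j, ‖g (i+1) j‖ ^ 2 ≤ (if c j = i + 1 then (L i / K)^2 else 0) := by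
      intro j
      simp only [hg]
      split
      · rename_i h
        exact pow_le_pow_left₀ (norm_nonneg _) (hentry i j h) 2
      · simp
    have hsum : (∑ j, ‖g (i+1) j‖ ^ 2) ≤ (B (i+1)).card • ((L i / K)^2) := by
      calc (∑ j, ‖g (i+1) j‖ ^ 2) ≤ ∑ j, (if c j = i + 1 then (L i / K)^2 else 0) :=
            Finset.sum_le_sum fun j _ => hstep j
        _ = ∑ j ∈ B (i+1), (L i / K)^2 := by
            simp only [hB]
            exact (Finset.sum_filter _ _).symm
        _ ≤ (B (i+1)).card • ((L i / K)^2) := by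
            rw [Finset.sum_const]
    have hcK : ((B (i+1)).card : ℝ) ≤ (K:ℝ) := by exact_mod_cast hBcard (i+1)
    have hsum2 : (∑ j, ‖g (i+1) j‖ ^ 2) ≤ (K:ℝ) * ((L i / K)^2) := by
      refine le_trans hsum ?_
      rw [nsmul_eq_mul]
      exact mul_le_mul_of_nonneg_right hcK (sq_nonneg _)
    have heq : (K:ℝ) * ((L i / K)^2) = (L i / Real.sqrt K)^2 := by
      rw [div_pow, div_pow, Real.sq_sqrt hKR.le]
      field_simp
    rw [heq] at hsum2
    calc l2 (g (i+1)) ≤ Real.sqrt ((L i / Real.sqrt K)^2) := by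
          unfold l2
          exact Real.sqrt_le_sqrt hsum2
      _ = L i / Real.sqrt K := Real.sqrt_sq (div_nonneg (hLnn i) hsK.le)
  -- sum of L over all blocks is at most l1 v
  have hLsum : ∀ s : Finset ℕ, (∑ i ∈ s, L i) ≤ l1 v := by
    intro s
    have h1 : (∑ i ∈ s ∪ Finset.range t, L i) = ∑ i ∈ s ∪ Finset.range t,
        ∑ j ∈ Finset.univ.filter (fun j => c j = i), ‖v j‖ := rfl
    calc (∑ i ∈ s, L i) ≤ ∑ i ∈ s ∪ Finset.range t, L i :=
          Finset.sum_le_sum_of_subset_of_nonneg Finset.subset_union_left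
            (fun i _ _ => hLnn i)
      _ = ∑ j, ‖v j‖ := by
          rw [h1]
          exact Finset.sum_fiberwise_of_maps_to
            (fun j _ => Finset.mem_union_right _ (hct j)) _
      _ = l1 v := rfl
  -- assemble
  have hmv : A.mulVec v = ∑ i ∈ Finset.range t, A.mulVec (g i) := by
    conv_lhs => rw [hdecomp]
    rw [← Matrix.mulVecLin_apply, map_sum]
    simp [Matrix.mulVecLin_apply]
  calc l2 (A.mulVec v) = l2 (∑ i ∈ Finset.range t, A.mulVec (g i)) := by rw [hmv]
    _ ≤ ∑ i ∈ Finset.range t, l2 (A.mulVec (g i)) := l2_sum_le _ _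
    _ ≤ ∑ i ∈ Finset.range t, Real.sqrt (1 + δ) * l2 (g i) :=
        Finset.sum_le_sum fun i _ => rip_upper hδ0 hRIP (hsparse i)
    _ = Real.sqrt (1 + δ) * ∑ i ∈ Finset.range t, l2 (g i) := by
        rw [Finset.mul_sum]
    _ ≤ Real.sqrt (1 + δ) * (l2 v + l1 v / Real.sqrt K) := by
        apply mul_le_mul_of_nonneg_left _ (Real.sqrt_nonneg _)
        rw [ht, Finset.sum_range_succ']
        have h2 : (∑ i ∈ Finset.range (n / K), l2 (g (i+1))) ≤ l1 v / Real.sqrt K := by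
          calc (∑ i ∈ Finset.range (n / K), l2 (g (i+1)))
              ≤ ∑ i ∈ Finset.range (n / K), L i / Real.sqrt K :=
                Finset.sum_le_sum fun i _ => hgblock i
            _ = (∑ i ∈ Finset.range (n / K), L i) / Real.sqrt K := by
                rw [Finset.sum_div]
            _ ≤ l1 v / Real.sqrt K := by
                gcongr
                exact hLsum _
        linarith [hg0, h2]

lemma l2_neg {ι : Type*} [Fintype ι] (v : ι → ℂ) : l2 (-v) = l2 v := by
  simp [l2]

lemma rip_lower {m n K : ℕ} {A : Matrix (Fin m) (Fin n) ℂ} {δ : ℝ} (hδ1 : δ < 1)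
    (hRIP : ∀ v : Fin n → ℂ, Sparse K v → (1 - δ) * l2 v ^ 2 ≤ l2 (A.mulVec v) ^ 2)
    {w : Fin n → ℂ} (hw : Sparse K w) :
    Real.sqrt (1 - δ) * l2 w ≤ l2 (A.mulVec w) := by
  have h := hRIP w hw
  calc Real.sqrt (1 - δ) * l2 w = Real.sqrt ((1 - δ) * l2 w ^ 2) := by
        rw [Real.sqrt_mul (by linarith), Real.sqrt_sq (l2_nonneg _)]
    _ ≤ Real.sqrt (l2 (A.mulVec w) ^ 2) := Real.sqrt_le_sqrt h
    _ = l2 (A.mulVec w) := Real.sqrt_sq (l2_nonneg _)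

/-- total perturbation bound ‖Ex‖₂ + ‖e‖₂ ≤ ε'_{A,K,b}. -/
theorem total_perturbation_bound {m n K : ℕ} (hK : 0 < K)
    (A E : Matrix (Fin m) (Fin n) ℂ) (δ εK εA εb nA : ℝ)
    (hδ0 : 0 ≤ δ) (hδ1 : δ < 1) (hεK : 0 ≤ εK) (hεA : 0 ≤ εA) (hεb : 0 ≤ εb)
    (hnA : 0 ≤ nA)
    (hRIP : ∀ v : Fin n → ℂ, Sparse K v →
      (1 - δ) * l2 v ^ 2 ≤ l2 (A.mulVec v) ^ 2 ∧ l2 (A.mulVec v) ^ 2 ≤ (1 + δ) * l2 v ^ 2)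
    (hAop : ∀ v : Fin n → ℂ, l2 (A.mulVec v) ≤ nA * l2 v)
    (hEK : ∀ v : Fin n → ℂ, Sparse K v → l2 (E.mulVec v) ≤ εK * Real.sqrt (1 + δ) * l2 v)
    (hEop : ∀ v : Fin n → ℂ, l2 (E.mulVec v) ≤ εA * nA * l2 v)
    (x xK : Fin n → ℂ) (hbest : IsBestKApprox K x xK) (hxK : xK ≠ 0)
    (hcond : l2 (x - xK) / l2 xK + (l1 (x - xK) / l2 xK) / Real.sqrt K
        < 1 / (Real.sqrt (1 + δ) / Real.sqrt (1 - δ)))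
    (e : Fin m → ℂ) (he : l2 e ≤ εb * l2 (A.mulVec x)) :
    l2 (E.mulVec x) + l2 e ≤
      ((εK * (Real.sqrt (1 + δ) / Real.sqrt (1 - δ)) +
          εA * (nA / Real.sqrt (1 - δ)) * (l2 (x - xK) / l2 xK)) /
        (1 - (Real.sqrt (1 + δ) / Real.sqrt (1 - δ)) *
          (l2 (x - xK) / l2 xK + (l1 (x - xK) / l2 xK) / Real.sqrt K)) + εb) *
        l2 (A.mulVec x) := by
  have hKR : (0:ℝ) < K := by exact_mod_cast hK
  have hsKp : (0:ℝ) < Real.sqrt K := Real.sqrt_pos.mpr hKR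
  set L := l2 xK with hLdef
  have hL : 0 < L := l2_pos hxK
  set sd := Real.sqrt (1 - δ) with hsddef
  set su := Real.sqrt (1 + δ) with hsudef
  have hsd : 0 < sd := Real.sqrt_pos.mpr (by linarith)
  have hsu : 0 < su := Real.sqrt_pos.mpr (by linarith)
  set κ := su / sd with hκdef
  have hκ : 0 < κ := div_pos hsu hsd
  have hκsd : κ * sd = su := div_mul_cancel₀ _ hsd.ne'
  set r := l2 (x - xK) / L with hrdef
  set s := l1 (x - xK) / L with hsdef
  have hr0 : 0 ≤ r := div_nonneg (l2_nonneg _) hL.le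
  have hs0 : 0 ≤ s := div_nonneg (l1_nonneg _) hL.le
  have hrL : l2 (x - xK) = r * L := by rw [hrdef, div_mul_cancel₀ _ hL.ne']
  have hsL : l1 (x - xK) = s * L := by rw [hsdef, div_mul_cancel₀ _ hL.ne']
  set P := r + s / Real.sqrt K with hPdef
  have hP0 : 0 ≤ P := by positivity
  set D := 1 - κ * P with hDdef
  have hD : 0 < D := by
    have h1 : κ * P < κ * (1 / κ) := mul_lt_mul_of_pos_left hcond hκ
    rw [mul_one_div, div_self hκ.ne'] at h1
    simpa [hDdef] using h1
  -- bound on l2 (E x)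
  have hxsplit : x = xK + (x - xK) := by abel
  have h1 : l2 (E.mulVec x) ≤ εK * su * L + εA * nA * (r * L) := by
    calc l2 (E.mulVec x) = l2 (E.mulVec xK + E.mulVec (x - xK)) := by
          rw [← Matrix.mulVec_add, ← hxsplit]
      _ ≤ l2 (E.mulVec xK) + l2 (E.mulVec (x - xK)) := l2_add_le _ _
      _ ≤ εK * su * L + εA * nA * (r * L) := by
          have ha := hEK xK hbest.1
          have hb := hEop (x - xK)
          rw [hrL] at hb
          exact add_le_add ha hb
  -- lower bound on l2 (A x)
  have h2 : sd * L * D ≤ l2 (A.mulVec x) := by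
    have hAxK : sd * L ≤ l2 (A.mulVec xK) :=
      rip_lower hδ1 (fun v hv => (hRIP v hv).1) hbest.1
    have htri : l2 (A.mulVec xK) ≤ l2 (A.mulVec x) + l2 (A.mulVec (x - xK)) := by
      have hv : xK = x + (-(x - xK)) := by abel
      calc l2 (A.mulVec xK) = l2 (A.mulVec x + (- A.mulVec (x - xK))) := by
            rw [← Matrix.mulVec_neg, ← Matrix.mulVec_add, ← hv]
        _ ≤ l2 (A.mulVec x) + l2 (- A.mulVec (x - xK)) := l2_add_le _ _
        _ = l2 (A.mulVec x) + l2 (A.mulVec (x - xK)) := by rw [l2_neg]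
    have hblk : l2 (A.mulVec (x - xK)) ≤ su * (L * P) := by
      have := mulVec_le_blocks hK hδ0 (fun v hv => (hRIP v hv).2) (x - xK)
      rw [hrL, hsL] at this
      calc l2 (A.mulVec (x - xK)) ≤ su * (r * L + s * L / Real.sqrt K) := this
        _ = su * (L * P) := by rw [hPdef]; ring
    have hkey : sd * L * D = sd * L - su * (L * P) := by
      rw [hDdef, ← hκsd]; ring
    linarith
  -- final assembly
  set num := εK * κ + εA * (nA / sd) * r with hnumdef
  have hnum0 : 0 ≤ num := by positivity
  have h3 : εK * su * L + εA * nA * (r * L) ≤ num / D * l2 (A.mulVec x) := by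
    have hc1 : num / D * (sd * L * D) ≤ num / D * l2 (A.mulVec x) :=
      mul_le_mul_of_nonneg_left h2 (by positivity)
    have hc2 : num / D * (sd * L * D) = εK * su * L + εA * nA * (r * L) := by
      rw [hnumdef, ← hκsd]
      field_simp
    linarith
  calc l2 (E.mulVec x) + l2 e ≤ num / D * l2 (A.mulVec x) + εb * l2 (A.mulVec x) := by
        linarith
    _ = (num / D + εb) * l2 (A.mulVec x) := by ring
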